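/- Let X follow a hypergeometric distribution with parameters N, M, k (i.e., P(X = j) = C(M,j)·C(N-M, k-j)/C(N,k)), and let Y follow a binomial distribution with parameters n = k and p = M/N. Then for every real m ≥ 1/2, E|X - kM/N|^{2m} ≤ E|Y - kM/N|^{2m}. -/

import Mathlib

open Finset

noncomputable def hypw (N M k j : ℕ) : ℝ :=
  (M.choose j : ℝ) * ((N - M).choose (k - j) : ℝ) / (N.choose k : ℝ)

noncomputable def binw (N M k j : ℕ) : ℝ :=
  (k.choose j : ℝ) * ((M : ℝ) / N) ^ j * (1 - (M : ℝ) / N) ^ (k - j)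

lemma aux_mono {w : ℕ → ℝ} {i : ℕ} : ∀ {j : ℕ}, i ≤ j →
    (∀ r, i ≤ r → r < j → w r ≤ w (r + 1)) → w i ≤ w j := by
  intro j
  induction j with
  | zero => intro hij _; simp [Nat.le_zero.mp hij]
  | succ n ih =>
    intro hij h
    rcases Nat.lt_or_ge i (n + 1) with hlt | hge
    · have h1 : w i ≤ w n := ih (Nat.lt_succ_iff.mp hlt)
        (fun r hr hrn => h r hr (hrn.trans (Nat.lt_succ_self n)))
      exact h1.trans (h n (Nat.lt_succ_iff.mp hlt) (Nat.lt_succ_self n))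
    · have : i = n + 1 := le_antisymm hij hge
      simp [this]

lemma chord_between {F : ℝ → ℝ} (hF : ConvexOn ℝ Set.univ F) {u v x : ℝ}
    (huv : u < v) (h1 : u ≤ x) (h2 : x ≤ v) :
    F x ≤ F u + (F v - F u) / (v - u) * (x - u) := by
  have hvu : (0:ℝ) < v - u := by linarith
  have ha : (0:ℝ) ≤ (v - x) / (v - u) := div_nonneg (by linarith) hvu.le
  have hb : (0:ℝ) ≤ (x - u) / (v - u) := div_nonneg (by linarith) hvu.le
  have hab : (v - x) / (v - u) + (x - u) / (v - u) = 1 := by field_simp; ring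
  have hx : (v - x) / (v - u) * u + (x - u) / (v - u) * v = x := by
    field_simp; ring
  have hle := hF.2 (Set.mem_univ u) (Set.mem_univ v) ha hb hab
  simp only [smul_eq_mul] at hle
  rw [hx] at hle
  have heq : F u + (F v - F u) / (v - u) * (x - u)
      = (v - x) / (v - u) * F u + (x - u) / (v - u) * F v := by
    field_simp; ring
  linarith [heq ▸ hle]

lemma chord_right {F : ℝ → ℝ} (hF : ConvexOn ℝ Set.univ F) {u v x : ℝ}
    (huv : u < v) (hvx : v ≤ x) :
    F u + (F v - F u) / (v - u) * (x - u) ≤ F x := by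
  have hvu : (0:ℝ) < v - u := by linarith
  rcases eq_or_lt_of_le hvx with rfl | hlt
  · have : (F v - F u) / (v - u) * (v - u) = F v - F u := by field_simp
    linarith
  · have hxu : (0:ℝ) < x - u := by linarith
    have ha : (0:ℝ) ≤ (x - v) / (x - u) := div_nonneg (by linarith) hxu.le
    have hb : (0:ℝ) ≤ (v - u) / (x - u) := div_nonneg (by linarith) hxu.le
    have hab : (x - v) / (x - u) + (v - u) / (x - u) = 1 := by field_simp; ring
    have hmid : (x - v) / (x - u) * u + (v - u) / (x - u) * x = v := by
      field_simp; ring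
    have hle := hF.2 (Set.mem_univ u) (Set.mem_univ x) ha hb hab
    simp only [smul_eq_mul] at hle
    rw [hmid] at hle
    -- hle : F v ≤ (x-v)/(x-u) * F u + (v-u)/(x-u) * F x
    have key : F v * (x - u) ≤ (x - v) * F u + (v - u) * F x := by
      have := mul_le_mul_of_nonneg_right hle hxu.le
      calc F v * (x - u) ≤ ((x - v) / (x - u) * F u + (v - u) / (x - u) * F x) * (x - u) := this
        _ = (x - v) * F u + (v - u) * F x := by field_simp
    rw [div_mul_eq_mul_div, ← sub_nonneg]
    have : F x - (F u + (F v - F u) * (x - u) / (v - u))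
        = ((x - v) * F u + (v - u) * F x - F v * (x - u)) / (v - u) := by
      field_simp; ring
    rw [this]
    exact div_nonneg (by linarith) hvu.le

lemma chord_left {F : ℝ → ℝ} (hF : ConvexOn ℝ Set.univ F) {u v x : ℝ}
    (huv : u < v) (hxu : x ≤ u) :
    F u + (F v - F u) / (v - u) * (x - u) ≤ F x := by
  have hvu : (0:ℝ) < v - u := by linarith
  rcases eq_or_lt_of_le hxu with rfl | hlt
  · simp
  · have hvx : (0:ℝ) < v - x := by linarith
    have ha : (0:ℝ) ≤ (v - u) / (v - x) := div_nonneg (by linarith) hvx.le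
    have hb : (0:ℝ) ≤ (u - x) / (v - x) := div_nonneg (by linarith) hvx.le
    have hab : (v - u) / (v - x) + (u - x) / (v - x) = 1 := by field_simp; ring
    have hmid : (v - u) / (v - x) * x + (u - x) / (v - x) * v = u := by
      field_simp; ring
    have hle := hF.2 (Set.mem_univ x) (Set.mem_univ v) ha hb hab
    simp only [smul_eq_mul] at hle
    rw [hmid] at hle
    have key : F u * (v - x) ≤ (v - u) * F x + (u - x) * F v := by
      have := mul_le_mul_of_nonneg_right hle hvx.le
      calc F u * (v - x) ≤ ((v - u) / (v - x) * F x + (u - x) / (v - x) * F v) * (v - x) := this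
        _ = (v - u) * F x + (u - x) * F v := by field_simp
    rw [div_mul_eq_mul_div, ← sub_nonneg]
    have : F x - (F u + (F v - F u) * (x - u) / (v - u))
        = ((v - u) * F x + (u - x) * F v - F u * (v - x)) / (v - u) := by
      field_simp; ring
    rw [this]
    exact div_nonneg (by linarith) hvu.le

lemma conv_abs_rpow (c e : ℝ) (he : 1 ≤ e) :
    ConvexOn ℝ Set.univ (fun x : ℝ => |x - c| ^ e) := by
  refine ⟨convex_univ, fun x _ y _ a b ha hb hab => ?_⟩
  simp only [smul_eq_mul]
  have h1 : |a * x + b * y - c| ≤ a * |x - c| + b * |y - c| := by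
    have : a * x + b * y - c = a * (x - c) + b * (y - c) := by
      linear_combination c * hab
    rw [this]
    calc |a * (x - c) + b * (y - c)| ≤ |a * (x - c)| + |b * (y - c)| := abs_add_le _ _
      _ = a * |x - c| + b * |y - c| := by
          rw [abs_mul, abs_mul, abs_of_nonneg ha, abs_of_nonneg hb]
  have h2 : |a * x + b * y - c| ^ e ≤ (a * |x - c| + b * |y - c|) ^ e :=
    Real.rpow_le_rpow (abs_nonneg _) h1 (by linarith)
  have h3 := (convexOn_rpow he).2 (Set.mem_Ici.mpr (abs_nonneg (x - c)))
    (Set.mem_Ici.mpr (abs_nonneg (y - c))) ha hb hab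
  simp only [smul_eq_mul] at h3
  exact h2.trans h3

lemma vandermonde_range (M M' k : ℕ) :
    ∑ j ∈ Finset.range (k + 1), M.choose j * M'.choose (k - j) = (M + M').choose k := by
  rw [Nat.add_choose_eq]
  rw [Finset.Nat.sum_antidiagonal_eq_sum_range_succ (fun i j => M.choose i * M'.choose j)]

lemma hyp_mass (N M k : ℕ) (hMN : M ≤ N) (hkN : k ≤ N) :
    ∑ j ∈ Finset.range (k + 1), hypw N M k j = 1 := by
  have hC : (0:ℝ) < (N.choose k : ℝ) := by
    exact_mod_cast Nat.choose_pos hkN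
  have hv := vandermonde_range M (N - M) k
  rw [Nat.add_sub_cancel' hMN] at hv
  simp only [hypw, div_eq_mul_inv, ← Finset.sum_mul]
  rw [show ∑ j ∈ Finset.range (k + 1), (M.choose j : ℝ) * ((N - M).choose (k - j) : ℝ)
      = ((N.choose k : ℕ) : ℝ) by exact_mod_cast congrArg (Nat.cast (R := ℝ)) hv]
  field_simp

lemma bin_mass (p q : ℝ) (hpq : p + q = 1) (k : ℕ) :
    ∑ j ∈ Finset.range (k + 1), (k.choose j : ℝ) * p ^ j * q ^ (k - j) = 1 := by
  calc ∑ j ∈ Finset.range (k + 1), (k.choose j : ℝ) * p ^ j * q ^ (k - j)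
      = ∑ j ∈ Finset.range (k + 1), p ^ j * q ^ (k - j) * (k.choose j : ℝ) :=
        Finset.sum_congr rfl (fun j _ => by ring)
    _ = (p + q) ^ k := (add_pow p q k).symm
    _ = 1 := by rw [hpq, one_pow]

lemma bin_mean (p q : ℝ) (hpq : p + q = 1) (k : ℕ) :
    ∑ j ∈ Finset.range (k + 1), (j : ℝ) * ((k.choose j : ℝ) * p ^ j * q ^ (k - j))
      = k * p := by
  rcases Nat.eq_zero_or_pos k with rfl | hk
  · simp
  obtain ⟨n, rfl⟩ := Nat.exists_eq_add_of_lt hk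
  simp only [zero_add]
  rw [Finset.sum_range_succ' (fun j => (j : ℝ) * (((n+1).choose j : ℝ) * p ^ j * q ^ (n + 1 - j)))]
  simp only [Nat.cast_zero, zero_mul, add_zero]
  have hstep : ∀ i : ℕ, ((i+1 : ℕ) : ℝ) * (((n+1).choose (i+1) : ℝ) * p ^ (i+1) * q ^ (n + 1 - (i+1)))
      = ((n+1 : ℕ) : ℝ) * p * ((n.choose i : ℝ) * p ^ i * q ^ (n - i)) := by
    intro i
    have h1 : (n+1) * n.choose i = (n+1).choose (i+1) * (i+1) := Nat.add_one_mul_choose_eq n i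
    have h1' : ((n:ℝ)+1) * (n.choose i : ℝ) = ((n+1).choose (i+1) : ℝ) * ((i:ℝ)+1) := by
      exact_mod_cast congrArg (Nat.cast (R := ℝ)) h1
    have h2 : n + 1 - (i+1) = n - i := by omega
    rw [h2, pow_succ]
    push_cast
    linear_combination (-(p ^ i * p * q ^ (n - i))) * h1'
  rw [Finset.sum_congr rfl (fun i _ => hstep i)]
  rw [← Finset.mul_sum, bin_mass p q hpq n]
  push_cast; ring

lemma hyp_mean (N M k : ℕ) (hM : 1 ≤ M) (hMN : M ≤ N) (hkN : k ≤ N) :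
    ∑ j ∈ Finset.range (k + 1), (j : ℝ) * hypw N M k j = k * M / N := by
  have hN : 0 < N := lt_of_lt_of_le hM hMN
  have hC : (0:ℝ) < (N.choose k : ℝ) := by exact_mod_cast Nat.choose_pos hkN
  rcases Nat.eq_zero_or_pos k with rfl | hk
  · simp
  obtain ⟨n, rfl⟩ := Nat.exists_eq_add_of_lt hk
  simp only [zero_add]
  -- nat identity
  have natid : ∑ j ∈ Finset.range (n + 1 + 1), j * (M.choose j * (N - M).choose (n + 1 - j))
      = M * (N-1).choose n := by
    rw [Finset.sum_range_succ' (fun j => j * (M.choose j * (N - M).choose (n + 1 - j)))]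
    simp only [Nat.zero_eq, zero_mul, add_zero]
    have hstep : ∀ i : ℕ, (i+1) * (M.choose (i+1) * (N - M).choose (n + 1 - (i+1)))
        = M * ((M-1).choose i * (N - M).choose (n - i)) := by
      intro i
      have h1 : M * (M-1).choose i = M.choose (i+1) * (i+1) := by
        simpa [Nat.succ_eq_add_one, Nat.sub_add_cancel hM] using Nat.add_one_mul_choose_eq (M-1) i
      have h2 : n + 1 - (i+1) = n - i := by omega
      rw [h2]
      calc (i+1) * (M.choose (i+1) * (N - M).choose (n - i))
          = (M.choose (i+1) * (i+1)) * (N - M).choose (n - i) := by ring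
        _ = (M * (M-1).choose i) * (N - M).choose (n - i) := by rw [h1]
        _ = M * ((M-1).choose i * (N - M).choose (n - i)) := by ring
    rw [Finset.sum_congr rfl (fun i _ => hstep i)]
    rw [← Finset.mul_sum]
    have hv := vandermonde_range (M-1) (N-M) n
    have hMN1 : M - 1 + (N - M) = N - 1 := by omega
    rw [hMN1] at hv
    rw [hv]
  -- to reals
  have hsum : ∑ j ∈ Finset.range (n + 1 + 1), (j : ℝ) * hypw N M (n+1) j
      = (M * (N-1).choose n : ℕ) / (N.choose (n+1) : ℝ) := by
    rw [← natid]
    push_cast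
    rw [Finset.sum_div]
    apply Finset.sum_congr rfl
    intro j _
    simp only [hypw]
    ring
  rw [hsum]
  have h3 : N * (N-1).choose n = N.choose (n+1) * (n+1) := by
    simpa [Nat.succ_eq_add_one, Nat.sub_add_cancel hN] using Nat.add_one_mul_choose_eq (N-1) n
  have h3' : (N:ℝ) * ((N-1).choose n : ℝ) = (N.choose (n+1) : ℝ) * ((n:ℝ)+1) := by
    exact_mod_cast congrArg (Nat.cast (R := ℝ)) h3
  have hN' : (0:ℝ) < (N:ℝ) := by exact_mod_cast hN
  have hC2 : ((N.choose (n+1) : ℕ) : ℝ) ≠ 0 := by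
    exact_mod_cast (Nat.choose_pos (show n+1 ≤ N by omega)).ne'
  push_cast
  rw [div_eq_div_iff hC2 hN'.ne']
  linear_combination (M:ℝ) * h3'

lemma binw_pos (N M k j : ℕ) (hN : 0 < N) (hM0 : 0 < M) (hMN : M < N) (hj : j ≤ k) :
    0 < binw N M k j := by
  have hp : (0:ℝ) < (M:ℝ)/N := div_pos (by exact_mod_cast hM0) (by exact_mod_cast hN)
  have hq : (0:ℝ) < 1 - (M:ℝ)/N := by
    have : (M:ℝ)/N < 1 := (div_lt_one (by exact_mod_cast hN)).2 (by exact_mod_cast hMN)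
    linarith
  have hc : (0:ℝ) < (k.choose j : ℝ) := by exact_mod_cast Nat.choose_pos hj
  simp only [binw]
  exact mul_pos (mul_pos hc (pow_pos hp j)) (pow_pos hq _)

lemma hypw_pos (N M k j : ℕ) (hkN : k ≤ N) (h1 : j ≤ M) (h2 : k - j ≤ N - M) :
    0 < hypw N M k j := by
  have c1 : (0:ℝ) < (M.choose j : ℝ) := by exact_mod_cast Nat.choose_pos h1
  have c2 : (0:ℝ) < ((N - M).choose (k - j) : ℝ) := by exact_mod_cast Nat.choose_pos h2
  have c3 : (0:ℝ) < (N.choose k : ℝ) := by exact_mod_cast Nat.choose_pos hkN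
  exact div_pos (mul_pos c1 c2) c3

lemma hypw_supp {N M k j : ℕ} (h : 0 < hypw N M k j) : j ≤ M ∧ k - j ≤ N - M := by
  constructor <;> by_contra hlt <;> push_neg at hlt
  · rw [hypw, Nat.choose_eq_zero_of_lt hlt] at h; simp at h
  · rw [hypw, Nat.choose_eq_zero_of_lt hlt] at h; simp at h

lemma step_key (N M k : ℕ) {r : ℕ} (hrk : r < k) (hr1M : r + 1 ≤ M)
    (hsup : k - r ≤ N - M) (hMN : M ≤ N) :
    hypw N M k (r+1) * binw N M k r * (((N - M - (k - (r+1)) : ℕ) : ℝ) * ((M:ℝ)/N))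
      = hypw N M k r * binw N M k (r+1) * (((M - r : ℕ) : ℝ) * (1 - (M:ℝ)/N)) := by
  have h1nat := Nat.choose_succ_right_eq M r
  have h1R : (M.choose (r+1) : ℝ) * ((r:ℝ) + 1)
      = (M.choose r : ℝ) * ((M - r : ℕ) : ℝ) := by exact_mod_cast h1nat
  have e1 : k - (r+1) + 1 = k - r := by omega
  have h2nat := Nat.choose_succ_right_eq (N - M) (k - (r+1))
  rw [e1] at h2nat
  have h2R : ((N-M).choose (k-r) : ℝ) * (((k - r : ℕ)) : ℝ)
      = ((N-M).choose (k-(r+1)) : ℝ) * ((N - M - (k - (r+1)) : ℕ) : ℝ) := by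
    exact_mod_cast h2nat
  have h3nat := Nat.choose_succ_right_eq k r
  have h3R : (k.choose (r+1) : ℝ) * ((r:ℝ) + 1)
      = (k.choose r : ℝ) * ((k - r : ℕ) : ℝ) := by exact_mod_cast h3nat
  have hpos : ((r:ℝ) + 1) * ((k - r : ℕ) : ℝ) ≠ 0 := by
    have : (0:ℕ) < k - r := by omega
    have : (0:ℝ) < ((k - r : ℕ) : ℝ) := by exact_mod_cast this
    positivity
  have hco : (M.choose (r+1) : ℝ) * ((N-M).choose (k-(r+1)) : ℝ) * (k.choose r : ℝ)
        * ((N - M - (k - (r+1)) : ℕ) : ℝ)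
      = (M.choose r : ℝ) * ((N-M).choose (k-r) : ℝ) * (k.choose (r+1) : ℝ)
        * ((M - r : ℕ) : ℝ) := by
    apply mul_right_cancel₀ hpos
    linear_combination
      (((N-M).choose (k-(r+1)) : ℝ) * (k.choose r : ℝ) * ((N - M - (k - (r+1)) : ℕ) : ℝ)
        * ((k - r : ℕ) : ℝ)) * h1R
      - ((M.choose r : ℝ) * ((M - r : ℕ) : ℝ) * (k.choose r : ℝ) * ((k - r : ℕ) : ℝ)) * h2R
      - ((M.choose r : ℝ) * ((M - r : ℕ) : ℝ) * ((N-M).choose (k-r) : ℝ)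
        * ((k - r : ℕ) : ℝ)) * h3R
  have hq : (1 - (M:ℝ)/N) ^ (k - r) = (1 - (M:ℝ)/N) ^ (k - (r+1)) * (1 - (M:ℝ)/N) := by
    rw [← e1, pow_succ]
  have hp' : ((M:ℝ)/N) ^ (r+1) = ((M:ℝ)/N) ^ r * ((M:ℝ)/N) := pow_succ _ r
  simp only [hypw, binw]
  rw [hq, hp']
  linear_combination (((M:ℝ)/N) ^ r * ((M:ℝ)/N) * (1 - (M:ℝ)/N) ^ (k - (r+1))
    * (1 - (M:ℝ)/N) / (N.choose k : ℝ)) * hco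

lemma sign_interval (N M k : ℕ) (hN : 0 < N) (hM0 : 0 < M) (hMN : M < N) (hkN : k ≤ N)
    {i j l : ℕ} (hij : i ≤ j) (hjl : j ≤ l) (hlk : l ≤ k)
    (hi : binw N M k i < hypw N M k i) (hl : binw N M k l < hypw N M k l) :
    binw N M k j < hypw N M k j := by
  by_contra hj
  push_neg at hj
  have hp : (0:ℝ) < (M:ℝ)/N := div_pos (by exact_mod_cast hM0) (by exact_mod_cast hN)
  have hq : (0:ℝ) < 1 - (M:ℝ)/N := by
    have : (M:ℝ)/N < 1 := (div_lt_one (by exact_mod_cast hN)).2 (by exact_mod_cast hMN)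
    linarith
  have hbin : ∀ r, r ≤ k → 0 < binw N M k r := fun r hr => binw_pos N M k r hN hM0 hMN hr
  have hsupi := hypw_supp (lt_trans (hbin i (le_trans hij (le_trans hjl hlk))) hi)
  have hsupl := hypw_supp (lt_trans (hbin l hlk) hl)
  have hsup : ∀ r, i ≤ r → r ≤ l → 0 < hypw N M k r := fun r h1 h2 =>
    hypw_pos N M k r hkN (le_trans h2 hsupl.1)
      (le_trans (Nat.sub_le_sub_left h1 k) hsupi.2)
  set w : ℕ → ℝ := fun r => hypw N M k r / binw N M k r with hw
  have hwi : 1 < w i := (one_lt_div (hbin i (le_trans hij (le_trans hjl hlk)))).2 hi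
  have hwl : 1 < w l := (one_lt_div (hbin l hlk)).2 hl
  have hwj : w j ≤ 1 := (div_le_one (hbin j (le_trans hjl hlk))).2 hj
  have key2 : ∀ r, i ≤ r → r < l →
      w (r+1) * (((N - M - (k - (r+1)) : ℕ) : ℝ) * ((M:ℝ)/N))
        = w r * (((M - r : ℕ) : ℝ) * (1 - (M:ℝ)/N)) := by
    intro r h1 h2
    have hrk : r < k := lt_of_lt_of_le h2 hlk
    have hr1M : r + 1 ≤ M := le_trans (by omega : r + 1 ≤ l) hsupl.1
    have hsupr : k - r ≤ N - M := le_trans (Nat.sub_le_sub_left h1 k) hsupi.2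
    have hk := step_key N M k hrk hr1M hsupr hMN.le
    have hb1 : binw N M k r ≠ 0 := (hbin r (by omega)).ne'
    have hb2 : binw N M k (r+1) ≠ 0 := (hbin (r+1) (by omega)).ne'
    simp only [hw]
    rw [div_mul_eq_mul_div, div_mul_eq_mul_div, div_eq_div_iff hb2 hb1]
    linear_combination hk
  have hDpos : ∀ r, i ≤ r → r < l → (0:ℝ) < ((N - M - (k - (r+1)) : ℕ) : ℝ) := by
    intro r h1 h2
    have hki : k - i ≤ N - M := hsupi.2
    have : 0 < N - M - (k - (r+1)) := by omega
    exact_mod_cast this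
  have hepos : ∀ r, r < l → (0:ℝ) < ((M - r : ℕ) : ℝ) := by
    intro r h2
    have hlM : l ≤ M := hsupl.1
    have : 0 < M - r := by omega
    exact_mod_cast this
  have hdown : ∃ r, i ≤ r ∧ r < j ∧ w (r+1) < w r := by
    by_contra hcon; push_neg at hcon
    have := aux_mono hij (fun r h1 h2 => hcon r h1 h2)
    linarith
  have hup : ∃ r, j ≤ r ∧ r < l ∧ w r < w (r+1) := by
    by_contra hcon; push_neg at hcon
    have := aux_mono (w := fun r => -(w r)) hjl
      (fun r h1 h2 => neg_le_neg (hcon r h1 h2))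
    simp only [neg_le_neg_iff] at this
    linarith
  obtain ⟨r0, h0i, h0j, h0w⟩ := hdown
  obtain ⟨r1, h1j, h1l, h1w⟩ := hup
  have h0l : r0 < l := lt_of_lt_of_le h0j hjl
  have hi1 : i ≤ r1 := le_trans hij h1j
  have hw0 : 0 < w r0 := div_pos (hsup r0 h0i h0l.le) (hbin r0 (by omega))
  have hw1 : 0 < w r1 := div_pos (hsup r1 hi1 h1l.le) (hbin r1 (by omega))
  have k0 := key2 r0 h0i h0l
  have k1 := key2 r1 hi1 h1l
  -- from k0 and h0w : e0*q < D0*p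
  have hD0 := hDpos r0 h0i h0l
  have hD1 := hDpos r1 hi1 h1l
  have he0 := hepos r0 h0l
  have he1 := hepos r1 h1l
  have step0 : ((M - r0 : ℕ) : ℝ) * (1 - (M:ℝ)/N)
      < ((N - M - (k - (r0+1)) : ℕ) : ℝ) * ((M:ℝ)/N) := by
    have h' : w (r0+1) * (((N - M - (k - (r0+1)) : ℕ) : ℝ) * ((M:ℝ)/N))
        < w r0 * (((N - M - (k - (r0+1)) : ℕ) : ℝ) * ((M:ℝ)/N)) :=
      mul_lt_mul_of_pos_right h0w (mul_pos hD0 hp)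
    rw [k0] at h'
    exact lt_of_mul_lt_mul_left h' hw0.le
  have step1 : ((N - M - (k - (r1+1)) : ℕ) : ℝ) * ((M:ℝ)/N)
      < ((M - r1 : ℕ) : ℝ) * (1 - (M:ℝ)/N) := by
    have h' : w r1 * (((N - M - (k - (r1+1)) : ℕ) : ℝ) * ((M:ℝ)/N))
        < w (r1+1) * (((N - M - (k - (r1+1)) : ℕ) : ℝ) * ((M:ℝ)/N)) :=
      mul_lt_mul_of_pos_right h1w (mul_pos hD1 hp)
    rw [k1] at h'
    exact lt_of_mul_lt_mul_left h' hw1.le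
  have hr01 : r0 ≤ r1 := le_trans (Nat.le_of_lt_succ (Nat.lt_succ_of_lt h0j)) h1j
  have hmono1 : ((M - r1 : ℕ) : ℝ) ≤ ((M - r0 : ℕ) : ℝ) := by
    have : M - r1 ≤ M - r0 := by omega
    exact_mod_cast this
  have hmono2 : ((N - M - (k - (r0+1)) : ℕ) : ℝ) ≤ ((N - M - (k - (r1+1)) : ℕ) : ℝ) := by
    have : N - M - (k - (r0+1)) ≤ N - M - (k - (r1+1)) := by omega
    exact_mod_cast this
  have hmm1 : ((M - r1 : ℕ) : ℝ) * (1 - (M:ℝ)/N) ≤ ((M - r0 : ℕ) : ℝ) * (1 - (M:ℝ)/N) :=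
    mul_le_mul_of_nonneg_right hmono1 hq.le
  have hmm2 : ((N - M - (k - (r0+1)) : ℕ) : ℝ) * ((M:ℝ)/N)
      ≤ ((N - M - (k - (r1+1)) : ℕ) : ℝ) * ((M:ℝ)/N) :=
    mul_le_mul_of_nonneg_right hmono2 hp.le
  linarith

/-- Hoeffding comparison: the `2m`-th central absolute moment of a hypergeometric
distribution with parameters `N, M, k` is at most that of the binomial distribution with
parameters `n = k`, `p = M/N` (moments about `kM/N`), for every real `m ≥ 1/2`. -/
theorem stmt9 (N M k : ℕ) (hN : 0 < N) (hMN : M ≤ N) (hkN : k ≤ N) (m : ℝ)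
    (hm : (1 : ℝ) / 2 ≤ m) :
    ∑ j ∈ Finset.range (k + 1),
        ((M.choose j * (N - M).choose (k - j) : ℝ) / (N.choose k : ℝ)) *
          |(j : ℝ) - (k : ℝ) * M / N| ^ (2 * m)
      ≤ ∑ j ∈ Finset.range (k + 1),
        ((k.choose j : ℝ) * ((M : ℝ) / N) ^ j * (1 - (M : ℝ) / N) ^ (k - j)) *
          |(j : ℝ) - (k : ℝ) * M / N| ^ (2 * m) := by
  have hCN : (0:ℝ) < (N.choose k : ℝ) := by exact_mod_cast Nat.choose_pos hkN
  set c : ℝ := (k : ℝ) * M / N with hc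
  set F : ℝ → ℝ := fun x => |x - c| ^ (2 * m) with hF
  have hFnn : ∀ x : ℝ, 0 ≤ F x := fun x => Real.rpow_nonneg (abs_nonneg _) _
  show ∑ j ∈ Finset.range (k + 1), hypw N M k j * F j
      ≤ ∑ j ∈ Finset.range (k + 1), binw N M k j * F j
  -- degenerate cases
  rcases Nat.eq_zero_or_pos M with rfl | hM0
  · apply le_of_eq
    apply Finset.sum_congr rfl
    intro j hj
    congr 1
    simp only [hypw, binw]
    rcases Nat.eq_zero_or_pos j with rfl | hj0
    · norm_num
      exact (Nat.choose_pos hkN).ne'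
    · rw [Nat.choose_eq_zero_of_lt hj0]
      norm_num [zero_pow hj0.ne']
  rcases eq_or_lt_of_le hMN with rfl | hMlt
  · apply le_of_eq
    apply Finset.sum_congr rfl
    intro j hj
    have hjk : j ≤ k := Nat.lt_succ_iff.mp (Finset.mem_range.mp hj)
    have hMM : (M:ℝ)/M = 1 := div_self (by exact_mod_cast hM0.ne')
    congr 1
    simp only [hypw, binw]
    rcases eq_or_lt_of_le hjk with rfl | hjlt
    · rw [hMM, Nat.sub_self, Nat.sub_self]
      norm_num
      exact (Nat.choose_pos hkN).ne'
    · have hpos : 0 < k - j := by omega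
      rw [hMM, Nat.sub_self]
      rw [show (0:ℕ).choose (k - j) = 0 from Nat.choose_eq_zero_of_lt hpos]
      norm_num [zero_pow hpos.ne']
  -- main case : 0 < M < N
  set p : ℝ := (M:ℝ)/N with hpdef
  have hp : (0:ℝ) < p := div_pos (by exact_mod_cast hM0) (by exact_mod_cast hN)
  have hq : (0:ℝ) < 1 - p := by
    have : p < 1 := (div_lt_one (by exact_mod_cast hN)).2 (by exact_mod_cast hMlt)
    linarith
  rw [← sub_nonneg, ← Finset.sum_sub_distrib]
  have hsplit : ∀ j, binw N M k j * F j - hypw N M k j * F j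
      = (binw N M k j - hypw N M k j) * F j := fun j => by ring
  simp only [hsplit]
  set d : ℕ → ℝ := fun j => binw N M k j - hypw N M k j with hd
  show 0 ≤ ∑ j ∈ Finset.range (k+1), d j * F j
  set S : Finset ℕ := (Finset.range (k+1)).filter (fun j => binw N M k j < hypw N M k j)
    with hS
  rcases Finset.eq_empty_or_nonempty S with hSe | hSne
  · apply Finset.sum_nonneg
    intro j hj
    have : ¬ (binw N M k j < hypw N M k j) := by
      intro hcon
      have hmem : j ∈ S := Finset.mem_filter.mpr ⟨hj, hcon⟩
      rw [hSe] at hmem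
      exact absurd hmem (Finset.notMem_empty j)
    exact mul_nonneg (by simp only [hd]; linarith [not_lt.mp this]) (hFnn _)
  -- nonempty bad set
  obtain ⟨a, b, haS, hbS, hab⟩ : ∃ a b, a ∈ S ∧ b ∈ S ∧ a ≤ b :=
    ⟨S.min' hSne, S.max' hSne, S.min'_mem hSne, S.max'_mem hSne,
      S.min'_le _ (S.max'_mem hSne)⟩
  have hmin : ∀ j ∈ S, S.min' hSne ≤ j := fun j hj => S.min'_le j hj
  have hmax : ∀ j ∈ S, j ≤ S.max' hSne := fun j hj => S.le_max' j hj
  set a := S.min' hSne with ha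
  set b := S.max' hSne with hb
  have haS' : a ∈ S := S.min'_mem hSne
  have hbS' : b ∈ S := S.max'_mem hSne
  have hak : a ≤ k := Nat.lt_succ_iff.mp (Finset.mem_range.mp (Finset.mem_filter.mp haS').1)
  have hbk : b ≤ k := Nat.lt_succ_iff.mp (Finset.mem_range.mp (Finset.mem_filter.mp hbS').1)
  have hia : binw N M k a < hypw N M k a := (Finset.mem_filter.mp haS').2
  have hib : binw N M k b < hypw N M k b := (Finset.mem_filter.mp hbS').2
  have hab' : a ≤ b := S.min'_le _ (S.max'_mem hSne)
  set u : ℝ := (a:ℝ) - 1/2 with hu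
  set v : ℝ := (b:ℝ) + 1/2 with hv
  have huv : u < v := by
    have : (a:ℝ) ≤ (b:ℝ) := by exact_mod_cast hab'
    simp only [hu, hv]; linarith
  have hconv : ConvexOn ℝ Set.univ F := conv_abs_rpow c (2*m) (by linarith)
  set L : ℝ → ℝ := fun x => F u + (F v - F u) / (v - u) * (x - u) with hL
  -- termwise nonnegativity of d * (F - L)
  have hterm : ∀ j ∈ Finset.range (k+1), 0 ≤ d j * (F j - L j) := by
    intro j hjr
    have hjk : j ≤ k := Nat.lt_succ_iff.mp (Finset.mem_range.mp hjr)
    by_cases hjS : binw N M k j < hypw N M k j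
    · have hjmem : j ∈ S := Finset.mem_filter.mpr ⟨hjr, hjS⟩
      have h1 : a ≤ j := S.min'_le j hjmem
      have h2 : j ≤ b := S.le_max' j hjmem
      have hux : u ≤ (j:ℝ) := by
        have : (a:ℝ) ≤ (j:ℝ) := by exact_mod_cast h1
        simp only [hu]; linarith
      have hxv : (j:ℝ) ≤ v := by
        have : (j:ℝ) ≤ (b:ℝ) := by exact_mod_cast h2
        simp only [hv]; linarith
      have hFL : F j ≤ L j := chord_between hconv huv hux hxv
      have hdj : d j < 0 := by simp only [hd]; linarith
      nlinarith
    · have hdj : 0 ≤ d j := by simp only [hd]; linarith [not_lt.mp hjS]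
      have houts : j < a ∨ b < j := by
        by_contra hcon
        push_neg at hcon
        exact hjS (sign_interval N M k hN hM0 hMlt hkN hcon.1 hcon.2 hbk hia hib)
      have hFL : L j ≤ F j := by
        rcases houts with hja | hbj
        · apply chord_left hconv huv
          have : (j:ℝ) + 1 ≤ (a:ℝ) := by exact_mod_cast hja
          simp only [hu]; linarith
        · apply chord_right hconv huv
          have : (b:ℝ) + 1 ≤ (j:ℝ) := by exact_mod_cast hbj
          simp only [hv]; linarith
      exact mul_nonneg hdj (by linarith)
  -- mass and mean
  have hmass : ∑ j ∈ Finset.range (k+1), d j = 0 := by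
    have h1 : ∑ j ∈ Finset.range (k+1), hypw N M k j = 1 := hyp_mass N M k hMN hkN
    have h2 : ∑ j ∈ Finset.range (k+1), binw N M k j = 1 := by
      have := bin_mass p (1-p) (by ring) k
      simpa [binw] using this
    simp only [hd, Finset.sum_sub_distrib, h1, h2, sub_self]
  have hmean : ∑ j ∈ Finset.range (k+1), (j:ℝ) * d j = 0 := by
    have h1 : ∑ j ∈ Finset.range (k+1), (j:ℝ) * hypw N M k j = k * M / N :=
      hyp_mean N M k hM0 hMN hkN
    have h2 : ∑ j ∈ Finset.range (k+1), (j:ℝ) * binw N M k j = k * M / N := by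
      have := bin_mean p (1-p) (by ring) k
      simp only [binw]
      rw [show ∑ j ∈ Finset.range (k+1), (j:ℝ) * ((k.choose j : ℝ) * p ^ j * (1-p) ^ (k-j))
        = (k:ℝ) * p from this]
      rw [hpdef]; ring
    have : ∑ j ∈ Finset.range (k+1), (j:ℝ) * d j
        = (∑ j ∈ Finset.range (k+1), (j:ℝ) * binw N M k j)
          - ∑ j ∈ Finset.range (k+1), (j:ℝ) * hypw N M k j := by
      simp only [hd]
      rw [← Finset.sum_sub_distrib]
      exact Finset.sum_congr rfl (fun j _ => by ring)
    rw [this, h1, h2, sub_self]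
  -- sum of d * L vanishes
  have hdL : ∑ j ∈ Finset.range (k+1), d j * L j = 0 := by
    have : ∀ j : ℕ, d j * L j
        = (F u - (F v - F u) / (v - u) * u) * d j + ((F v - F u) / (v - u)) * ((j:ℝ) * d j) :=
      fun j => by simp only [hL]; ring
    simp only [this]
    rw [Finset.sum_add_distrib, ← Finset.mul_sum, ← Finset.mul_sum, hmass, hmean]
    ring
  -- final assembly
  have hsum : ∑ j ∈ Finset.range (k+1), d j * F j
      = (∑ j ∈ Finset.range (k+1), d j * (F j - L j))
        + ∑ j ∈ Finset.range (k+1), d j * L j := by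
    rw [← Finset.sum_add_distrib]
    exact Finset.sum_congr rfl (fun j _ => by ring)
  rw [hsum, hdL, add_zero]
  exact Finset.sum_nonneg hterm
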